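/- The q-Gaussian e_{q²}(-X²) is of strict left type 1/2 on L(γ) for every γ > 0: there exists b > 0 with ν_{e,γ}(e_{q²}(-X²)) = O(q^{e²/4} b^e) as e → ∞, where ν_{e,γ}(f) = q^{(e²+e)/2} ∫_γ |f(x) x^e| d_q x. More precisely one has ν_{r,γ}(e_{q²}(-X²)) ≤ 2 q^{-1/4} c_q(γ) q^{r²/4} for all r ≥ 0. -/

import Mathlib

open scoped BigOperators

noncomputable section

/-- finite q-Pochhammer symbol `(a;q)_k` -/
def qPoch (q a : ℝ) (k : ℕ) : ℝ := ∏ j ∈ Finset.range k, (1 - a * q ^ j)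

/-- infinite q-Pochhammer symbol `(a;q)_∞` -/
def qPochInf (q a : ℝ) : ℝ := ∏' j : ℕ, (1 - a * q ^ j)

/-- q-integral over the lattice `L(γ) = {± q^k γ}` -/
def qInt (q γ : ℝ) (f : ℝ → ℝ) : ℝ :=
  (1 - q) * ∑' k : ℤ, (q ^ k * γ) * (f (q ^ k * γ) + f (-(q ^ k * γ)))

/-- k-th q-moment -/
def qMoment (q γ : ℝ) (e : ℕ) (f : ℝ → ℝ) : ℝ :=
  q ^ (e * (e + 1) / 2) * qInt q γ (fun x => f x * x ^ e)

/-- k-th strict q-moment -/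
def qNu (q γ : ℝ) (e : ℕ) (f : ℝ → ℝ) : ℝ :=
  q ^ (e * (e + 1) / 2) * qInt q γ (fun x => |f x * x ^ e|)

/-- q-derivative -/
def qDeriv (q : ℝ) (f : ℝ → ℝ) : ℝ → ℝ := fun x => (f x - f (q * x)) / ((1 - q) * x)

/-- q-factorial `[e]_q!` -/
def qFact (q : ℝ) (e : ℕ) : ℝ := qPoch q q e / (1 - q) ^ e

/-- q-binomial coefficient -/
def qBinom (q : ℝ) (n k : ℕ) : ℝ := qPoch q q n / (qPoch q q k * qPoch q q (n - k))

/-- q-convolution -/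
def qConv (q γ : ℝ) (f g : ℝ → ℝ) : ℝ → ℝ :=
  fun x => ∑' e : ℕ, (-1) ^ e * qMoment q γ e f / qFact q e * (qDeriv q)^[e] g x

/-- the q-Gaussian `e_{q²}(-x²)` -/
def qGauss (q : ℝ) : ℝ → ℝ := fun x => 1 / qPochInf (q ^ 2) (-(x ^ 2))

/-- discrete q-Hermite II polynomials -/
def qHermiteII (q : ℝ) (k : ℕ) (x : ℝ) : ℝ :=
  qPoch q q k * ∑ l ∈ Finset.range (k / 2 + 1),
    (-1) ^ l * q ^ (2 * l ^ 2 + l) / q ^ (2 * l * k) * x ^ (k - 2 * l) /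
      (qPoch (q ^ 2) (q ^ 2) l * qPoch q q (k - 2 * l))

/-- discrete delta function on the lattice, supported at `η γ q^p` -/
def qdelta (q γ η : ℝ) (p : ℤ) : ℝ → ℝ := fun x => if x = η * γ * q ^ p then 1 else 0



lemma qPochInf_gauss_eq (q x : ℝ) :
    qPochInf (q ^ 2) (-(x ^ 2)) = ∏' j : ℕ, (1 + x ^ 2 * (q ^ 2) ^ j) := by
  unfold qPochInf
  exact tprod_congr fun j => by ring

lemma factor_pos (q x : ℝ) (j : ℕ) : (0:ℝ) < 1 + x ^ 2 * (q ^ 2) ^ j := by positivity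

lemma aux_multipliable {q : ℝ} (hq0 : 0 < q) (hq1 : q < 1) (x : ℝ) :
    Multipliable (fun j : ℕ => 1 + x ^ 2 * (q ^ 2) ^ j) := by
  have hgeo : Summable (fun j : ℕ => x ^ 2 * (q ^ 2) ^ j) :=
    (summable_geometric_of_lt_one (by positivity) (by nlinarith)).mul_left (x ^ 2)
  have hlog : Summable (fun j : ℕ => Real.log (1 + x ^ 2 * (q ^ 2) ^ j)) := by
    refine Summable.of_nonneg_of_le (fun j => Real.log_nonneg ?_) (fun j => ?_) hgeo
    · nlinarith [pow_nonneg (sq_nonneg q) j, sq_nonneg x, sq_nonneg (x * q ^ j)]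
    · have := Real.log_le_sub_one_of_pos (factor_pos q x j)
      linarith
  have h := hlog.hasSum.rexp
  have e : (Real.exp ∘ fun j : ℕ => Real.log (1 + x ^ 2 * (q ^ 2) ^ j))
      = fun j : ℕ => 1 + x ^ 2 * (q ^ 2) ^ j :=
    funext fun j => Real.exp_log (factor_pos q x j)
  rw [e] at h
  exact ⟨_, h⟩

lemma one_le_P {q : ℝ} (hq0 : 0 < q) (hq1 : q < 1) (x : ℝ) :
    1 ≤ ∏' j : ℕ, (1 + x ^ 2 * (q ^ 2) ^ j) := by
  refine le_hasProd_of_le_prod (aux_multipliable hq0 hq1 x).hasProd fun s => ?_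
  refine Finset.prod_induction _ (fun z => 1 ≤ z) (fun a b ha hb => by nlinarith)
    le_rfl fun j _ => ?_
  have : (0:ℝ) ≤ x ^ 2 * (q ^ 2) ^ j := by positivity
  linarith

lemma qGauss_pos {q : ℝ} (hq0 : 0 < q) (hq1 : q < 1) (x : ℝ) : 0 < qGauss q x := by
  unfold qGauss
  rw [qPochInf_gauss_eq]
  have := one_le_P hq0 hq1 x
  positivity

lemma qGauss_le_one {q : ℝ} (hq0 : 0 < q) (hq1 : q < 1) (x : ℝ) : qGauss q x ≤ 1 := by
  unfold qGauss
  rw [qPochInf_gauss_eq]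
  have h := one_le_P hq0 hq1 x
  rw [div_le_one (by linarith)]
  linarith

lemma qGauss_even (q x : ℝ) : qGauss q (-x) = qGauss q x := by
  simp [qGauss, neg_sq]

set_option maxHeartbeats 1000000 in
lemma qGauss_step' {q : ℝ} (hq0 : 0 < q) (hq1 : q < 1) (x : ℝ) :
    (q ^ 2 + x ^ 2) * qGauss q (x / q) = q ^ 2 * qGauss q x := by
  have hq' : q ≠ 0 := hq0.ne'
  have e2 : ∀ j : ℕ, (1 + x ^ 2 * (q ^ 2) ^ j)
      = 1 + (x / q) ^ 2 * (q ^ 2) ^ (j + 1) := by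
    intro j
    have : (x / q) ^ 2 * (q ^ 2) ^ (j + 1) = x ^ 2 * (q ^ 2) ^ j := by
      field_simp
      ring
    rw [this]
  have hm1 : Multipliable (fun j : ℕ => 1 + (x / q) ^ 2 * (q ^ 2) ^ (j + 1)) :=
    (aux_multipliable hq0 hq1 x).congr e2
  have hpeel := tprod_eq_zero_mul' (f := fun j : ℕ => 1 + (x / q) ^ 2 * (q ^ 2) ^ j) hm1
  unfold qGauss
  rw [qPochInf_gauss_eq, qPochInf_gauss_eq, hpeel, tprod_congr fun j => (e2 j).symm]
  have hP := one_le_P hq0 hq1 x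
  have h0 : ((fun j : ℕ => 1 + (x / q) ^ 2 * (q ^ 2) ^ j) 0) = (q ^ 2 + x ^ 2) / q ^ 2 := by
    simp only []
    field_simp
  rw [show (1 + (x / q) ^ 2 * (q ^ 2) ^ 0) = (q ^ 2 + x ^ 2) / q ^ 2 from h0]
  have hq2 : (q:ℝ) ^ 2 ≠ 0 := by positivity
  have hPne : (∏' j : ℕ, (1 + x ^ 2 * (q ^ 2) ^ j)) ≠ 0 := by linarith
  field_simp

lemma qGauss_full {q : ℝ} (hq0 : 0 < q) (hq1 : q < 1) (x : ℝ) :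
    x ^ 2 * qGauss q (x / q) ≤ q ^ 2 * qGauss q x := by
  have h := qGauss_step' hq0 hq1 x
  have hg := qGauss_pos hq0 hq1 (x / q)
  nlinarith [sq_nonneg q]

lemma qGauss_half {q : ℝ} (hq0 : 0 < q) (hq1 : q < 1) (x : ℝ) :
    q * x * qGauss q (x / q) ≤ q ^ 2 * qGauss q x := by
  have h := qGauss_step' hq0 hq1 x
  have hg := qGauss_pos hq0 hq1 (x / q)
  nlinarith [sq_nonneg (x - q)]

lemma qGauss_iter {q : ℝ} (hq0 : 0 < q) (hq1 : q < 1) (x : ℝ) : ∀ s : ℕ,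
    x ^ (2 * s) * qGauss q (x / q ^ s) ≤ q ^ (s * (s + 1)) * qGauss q x := by
  intro s
  induction s with
  | zero => simp
  | succ s ih =>
    have hdiv : x / q ^ (s + 1) = (x / q ^ s) / q := by
      rw [div_div, ← pow_succ]
    have hfull := qGauss_full hq0 hq1 (x / q ^ s)
    rw [← hdiv] at hfull
    -- multiply hfull by q^(2*s) ≥ 0 :
    have h1 : x ^ 2 * qGauss q (x / q ^ (s + 1)) ≤ q ^ (2 * s + 2) * qGauss q (x / q ^ s) := by
      have h2 := mul_le_mul_of_nonneg_left hfull (pow_nonneg hq0.le (2 * s))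
      have e1 : q ^ (2 * s) * ((x / q ^ s) ^ 2 * qGauss q (x / q ^ (s + 1)))
          = x ^ 2 * qGauss q (x / q ^ (s + 1)) := by
        rw [div_pow, ← pow_mul]
        field_simp
        ring
      have e2 : q ^ (2 * s) * (q ^ 2 * qGauss q (x / q ^ s))
          = q ^ (2 * s + 2) * qGauss q (x / q ^ s) := by ring
      rw [e1, e2] at h2
      exact h2
    calc x ^ (2 * (s + 1)) * qGauss q (x / q ^ (s + 1))
        = x ^ (2 * s) * (x ^ 2 * qGauss q (x / q ^ (s + 1))) := by ring
      _ ≤ x ^ (2 * s) * (q ^ (2 * s + 2) * qGauss q (x / q ^ s)) := by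
          apply mul_le_mul_of_nonneg_left h1 ((even_two_mul s).pow_nonneg x)
      _ = q ^ (2 * s + 2) * (x ^ (2 * s) * qGauss q (x / q ^ s)) := by ring
      _ ≤ q ^ (2 * s + 2) * (q ^ (s * (s + 1)) * qGauss q x) := by
          apply mul_le_mul_of_nonneg_left ih (by positivity)
      _ = q ^ ((s + 1) * (s + 2)) * qGauss q x := by ring

lemma qGauss_iter_odd {q : ℝ} (hq0 : 0 < q) (hq1 : q < 1) (x : ℝ) (s : ℕ) :
    x ^ (2 * s + 1) * qGauss q (x / q ^ (s + 1)) ≤ q ^ ((s + 1) * (s + 1)) * qGauss q x := by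
  have hdiv : x / q ^ (s + 1) = (x / q ^ s) / q := by rw [div_div, ← pow_succ]
  have hhalf := qGauss_half hq0 hq1 (x / q ^ s)
  rw [← hdiv] at hhalf
  -- q * x * G(x/q^{s+1}) ≤ q^{s+2} * G(x/q^s) after multiplying by q^s
  have h1 : q * (x * qGauss q (x / q ^ (s + 1))) ≤ q * (q ^ (s + 1) * qGauss q (x / q ^ s)) := by
    have h2 := mul_le_mul_of_nonneg_left hhalf (pow_nonneg hq0.le s)
    have e1 : q ^ s * (q * (x / q ^ s) * qGauss q (x / q ^ (s + 1)))
        = q * (x * qGauss q (x / q ^ (s + 1))) := by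
      field_simp
    have e2 : q ^ s * (q ^ 2 * qGauss q (x / q ^ s))
        = q * (q ^ (s + 1) * qGauss q (x / q ^ s)) := by ring
    rw [e1, e2] at h2
    exact h2
  have h3 : x * qGauss q (x / q ^ (s + 1)) ≤ q ^ (s + 1) * qGauss q (x / q ^ s) :=
    le_of_mul_le_mul_left h1 hq0
  calc x ^ (2 * s + 1) * qGauss q (x / q ^ (s + 1))
      = x ^ (2 * s) * (x * qGauss q (x / q ^ (s + 1))) := by ring
    _ ≤ x ^ (2 * s) * (q ^ (s + 1) * qGauss q (x / q ^ s)) := by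
        apply mul_le_mul_of_nonneg_left h3 ((even_two_mul s).pow_nonneg x)
    _ = q ^ (s + 1) * (x ^ (2 * s) * qGauss q (x / q ^ s)) := by ring
    _ ≤ q ^ (s + 1) * (q ^ (s * (s + 1)) * qGauss q x) := by
        apply mul_le_mul_of_nonneg_left (qGauss_iter hq0 hq1 x s) (by positivity)
    _ = q ^ ((s + 1) * (s + 1)) * qGauss q x := by ring

lemma main_term {q : ℝ} (hq0 : 0 < q) (hq1 : q < 1) (x : ℝ) (hx : 0 < x) (r : ℕ) :
    q ^ (r * (r + 1) / 2) * ((x / q ^ ((r + 1) / 2)) ^ (r + 1) *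
      qGauss q (x / q ^ ((r + 1) / 2)))
      ≤ q ^ ((r / 2) * (r / 2 + 1)) * (x * qGauss q x) := by
  have hq' : q ≠ 0 := hq0.ne'
  rcases Nat.even_or_odd r with ⟨m, hm⟩ | ⟨m, hm⟩
  · -- r = m + m
    subst hm
    have h1 : (m + m) * (m + m + 1) / 2 = m * (2 * m + 1) := by
      rw [show (m + m) * (m + m + 1) = 2 * (m * (2 * m + 1)) by ring]
      omega
    have h2 : (m + m + 1) / 2 = m := by omega
    have h3 : (m + m) / 2 = m := by omega
    rw [h1, h2, h3]
    have e1 : q ^ (m * (2 * m + 1)) * ((x / q ^ m) ^ (m + m + 1) *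
        qGauss q (x / q ^ m)) = x ^ (2 * m + 1) * qGauss q (x / q ^ m) := by
      rw [div_pow, ← pow_mul]
      field_simp
      ring
    rw [e1]
    calc x ^ (2 * m + 1) * qGauss q (x / q ^ m)
        = x * (x ^ (2 * m) * qGauss q (x / q ^ m)) := by ring
      _ ≤ x * (q ^ (m * (m + 1)) * qGauss q x) := by
          apply mul_le_mul_of_nonneg_left (qGauss_iter hq0 hq1 x m) hx.le
      _ = q ^ (m * (m + 1)) * (x * qGauss q x) := by ring
  · -- r = 2 * m + 1
    subst hm
    have h1 : (2 * m + 1) * (2 * m + 1 + 1) / 2 = (2 * m + 1) * (m + 1) := by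
      rw [show (2 * m + 1) * (2 * m + 1 + 1) = 2 * ((2 * m + 1) * (m + 1)) by ring]
      omega
    have h2 : (2 * m + 1 + 1) / 2 = m + 1 := by omega
    have h3 : (2 * m + 1) / 2 = m := by omega
    rw [h1, h2, h3]
    have e1 : q ^ ((2 * m + 1) * (m + 1)) * ((x / q ^ (m + 1)) ^ (2 * m + 1 + 1) *
        qGauss q (x / q ^ (m + 1)))
        = (x * (x ^ (2 * m + 1) * qGauss q (x / q ^ (m + 1)))) / q ^ (m + 1) := by
      rw [div_pow, ← pow_mul]
      field_simp
      ring
    rw [e1]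
    have h4 : x * (x ^ (2 * m + 1) * qGauss q (x / q ^ (m + 1)))
        ≤ x * (q ^ ((m + 1) * (m + 1)) * qGauss q x) :=
      mul_le_mul_of_nonneg_left (qGauss_iter_odd hq0 hq1 x m) hx.le
    calc (x * (x ^ (2 * m + 1) * qGauss q (x / q ^ (m + 1)))) / q ^ (m + 1)
        ≤ (x * (q ^ ((m + 1) * (m + 1)) * qGauss q x)) / q ^ (m + 1) := by
          apply div_le_div_of_nonneg_right h4 (by positivity)
      _ = q ^ (m * (m + 1)) * (x * qGauss q x) := by
          rw [show (m + 1) * (m + 1) = m * (m + 1) + (m + 1) by ring, pow_add]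
          field_simp

lemma lattice_term {q γ : ℝ} (hq0 : 0 < q) (hq1 : q < 1) (hγ : 0 < γ) (r : ℕ) (k : ℤ) :
    q ^ (r * (r + 1) / 2) * ((q ^ (k - (((r + 1) / 2 : ℕ) : ℤ)) * γ) ^ (r + 1) *
      qGauss q (q ^ (k - (((r + 1) / 2 : ℕ) : ℤ)) * γ))
      ≤ q ^ ((r / 2) * (r / 2 + 1)) * ((q ^ k * γ) * qGauss q (q ^ k * γ)) := by
  have e : (q:ℝ) ^ (k - (((r + 1) / 2 : ℕ) : ℤ)) * γ = (q ^ k * γ) / q ^ ((r + 1) / 2) := by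
    rw [zpow_sub₀ hq0.ne', zpow_natCast]
    ring
  rw [e]
  exact main_term hq0 hq1 _ (by positivity) r

lemma hsum_aux {q γ : ℝ} (hq0 : 0 < q) (hq1 : q < 1) (hγ : 0 < γ) :
    Summable (fun n : ℕ => γ * q ^ (n * n) / γ ^ (2 * n)) := by
  apply summable_of_ratio_norm_eventually_le (r := 1/2) (by norm_num)
  have ht : Filter.Tendsto (fun n : ℕ => q * (q ^ 2) ^ n / γ ^ 2) Filter.atTop (nhds 0) := by
    have h1 := tendsto_pow_atTop_nhds_zero_of_lt_one (by positivity : (0:ℝ) ≤ q ^ 2)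
      (by nlinarith : q ^ 2 < 1)
    have h2 := (h1.const_mul q).div_const (γ ^ 2)
    simpa using h2
  filter_upwards [ht.eventually_le_const (by norm_num : (0:ℝ) < 1/2)] with n hn
  rw [Real.norm_eq_abs, Real.norm_eq_abs, abs_of_nonneg (by positivity),
    abs_of_nonneg (by positivity)]
  have e : γ * q ^ ((n+1) * (n+1)) / γ ^ (2 * (n+1))
      = (γ * q ^ (n * n) / γ ^ (2 * n)) * (q * (q ^ 2) ^ n / γ ^ 2) := by
    field_simp
    ring
  rw [e]
  calc (γ * q ^ (n * n) / γ ^ (2 * n)) * (q * (q ^ 2) ^ n / γ ^ 2)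
      ≤ (γ * q ^ (n * n) / γ ^ (2 * n)) * (1/2) :=
        mul_le_mul_of_nonneg_left hn (by positivity)
    _ = 1/2 * (γ * q ^ (n * n) / γ ^ (2 * n)) := mul_comm _ _

lemma hsum_u {q γ : ℝ} (hq0 : 0 < q) (hq1 : q < 1) (hγ : 0 < γ) :
    Summable (fun k : ℤ => (q ^ k * γ) * qGauss q (q ^ k * γ)) := by
  apply Summable.of_nat_of_neg
  · refine Summable.of_nonneg_of_le (fun n => ?_) (fun n => ?_)
      ((summable_geometric_of_lt_one hq0.le hq1).mul_left γ)
    · have h1 : (0:ℝ) < q ^ (n:ℤ) * γ := by positivity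
      exact (mul_pos h1 (qGauss_pos hq0 hq1 _)).le
    · rw [zpow_natCast]
      have hg := qGauss_le_one hq0 hq1 (q ^ n * γ)
      have hx : (0:ℝ) < q ^ n * γ := by positivity
      calc (q ^ n * γ) * qGauss q (q ^ n * γ) ≤ (q ^ n * γ) * 1 :=
            mul_le_mul_of_nonneg_left hg hx.le
        _ = γ * q ^ n := by ring
  · refine Summable.of_nonneg_of_le (fun n => ?_) (fun n => ?_) (hsum_aux hq0 hq1 hγ)
    · have h1 : (0:ℝ) < q ^ (-(n:ℤ)) * γ := by positivity
      exact (mul_pos h1 (qGauss_pos hq0 hq1 _)).le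
    · have e : (q:ℝ) ^ (-(n:ℤ)) * γ = γ / q ^ n := by
        rw [zpow_neg, zpow_natCast]
        ring
      rw [e]
      have hiter := qGauss_iter hq0 hq1 γ n
      have hG1 := qGauss_le_one hq0 hq1 γ
      have hGp := (qGauss_pos hq0 hq1 (γ / q ^ n)).le
      have hpos : (0:ℝ) ≤ γ / (q ^ n * γ ^ (2 * n)) := by positivity
      calc (γ / q ^ n) * qGauss q (γ / q ^ n)
          = (γ / (q ^ n * γ ^ (2 * n))) * (γ ^ (2 * n) * qGauss q (γ / q ^ n)) := by
            field_simp
        _ ≤ (γ / (q ^ n * γ ^ (2 * n))) * (q ^ (n * (n + 1)) * qGauss q γ) :=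
            mul_le_mul_of_nonneg_left hiter hpos
        _ ≤ (γ / (q ^ n * γ ^ (2 * n))) * (q ^ (n * (n + 1)) * 1) :=
            mul_le_mul_of_nonneg_left
              (mul_le_mul_of_nonneg_left hG1 (by positivity)) hpos
        _ = γ * q ^ (n * n) / γ ^ (2 * n) := by
            field_simp
            ring

/-- The q-Gaussian is of strict left type 1/2. -/
theorem stmt6 (q γ : ℝ) (hq : q ∈ Set.Ioo (0 : ℝ) 1) (hγ : 0 < γ) :
    (∀ r : ℕ, qNu q γ r (qGauss q) ≤
      2 * q ^ (-(1 / 4 : ℝ)) * qInt q γ (qGauss q) * q ^ (((r : ℝ) ^ 2) / 4)) ∧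
    (∃ b > (0 : ℝ), ∃ C > (0 : ℝ), ∀ e : ℕ,
      qNu q γ e (qGauss q) ≤ C * q ^ (((e : ℝ) ^ 2) / 4) * b ^ e) := by
  obtain ⟨hq0, hq1⟩ := hq
  have hupos : ∀ k : ℤ, 0 < (q ^ k * γ) * qGauss q (q ^ k * γ) := fun k => by
    have h1 : (0:ℝ) < q ^ k * γ := by positivity
    exact mul_pos h1 (qGauss_pos hq0 hq1 _)
  have hsumu := hsum_u hq0 hq1 hγ
  have hun : 0 ≤ ∑' k : ℤ, (q ^ k * γ) * qGauss q (q ^ k * γ) :=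
    tsum_nonneg fun k => (hupos k).le
  have hVal : qInt q γ (qGauss q) =
      (1 - q) * (2 * ∑' k : ℤ, (q ^ k * γ) * qGauss q (q ^ k * γ)) := by
    unfold qInt
    congr 1
    rw [← tsum_mul_left]
    refine tsum_congr fun k => ?_
    rw [qGauss_even]
    ring
  have hc_pos : 0 < qInt q γ (qGauss q) := by
    rw [hVal]
    have h2 : 0 < ∑' k : ℤ, (q ^ k * γ) * qGauss q (q ^ k * γ) :=
      Summable.tsum_pos hsumu (fun k => (hupos k).le) 0 (hupos 0)
    have h3 : 0 < 1 - q := by linarith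
    positivity
  have key : ∀ r : ℕ, qNu q γ r (qGauss q) ≤
      2 * q ^ (-(1 / 4 : ℝ)) * qInt q γ (qGauss q) * q ^ (((r : ℝ) ^ 2) / 4) := by
    intro r
    set s : ℕ := (r + 1) / 2 with hs
    set D : ℕ := (r / 2) * (r / 2 + 1) with hD
    set w : ℤ → ℝ := fun k =>
      q ^ (r * (r + 1) / 2) * ((q ^ k * γ) ^ (r + 1) * qGauss q (q ^ k * γ)) with hw
    have hterm : ∀ k : ℤ, w (k - (s:ℤ)) ≤
        q ^ D * ((q ^ k * γ) * qGauss q (q ^ k * γ)) := fun k => by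
      rw [hw]
      exact lattice_term hq0 hq1 hγ r k
    have hwnn : ∀ k : ℤ, 0 ≤ w (k - (s:ℤ)) := fun k => by
      rw [hw]
      have h1 : (0:ℝ) < q ^ (k - (s:ℤ)) * γ := by positivity
      have h2 := qGauss_pos hq0 hq1 (q ^ (k - (s:ℤ)) * γ)
      positivity
    have hsum2 : Summable (fun k : ℤ =>
        q ^ D * ((q ^ k * γ) * qGauss q (q ^ k * γ))) := hsumu.mul_left _
    have hsum3 : Summable (fun k : ℤ => w (k - (s:ℤ))) :=
      Summable.of_nonneg_of_le hwnn hterm hsum2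
    have hre : ∑' k : ℤ, w k = ∑' k : ℤ, w (k - (s:ℤ)) :=
      ((Equiv.subRight (s:ℤ)).tsum_eq w).symm
    have h2 : ∑' k : ℤ, w (k - (s:ℤ)) ≤
        q ^ D * ∑' k : ℤ, (q ^ k * γ) * qGauss q (q ^ k * γ) := by
      rw [← tsum_mul_left]
      exact Summable.tsum_le_tsum hterm hsum3 hsum2
    have hrpow : (q:ℝ) ^ D ≤ q ^ (-(1/4 : ℝ)) * q ^ (((r:ℝ) ^ 2) / 4) := by
      rw [← Real.rpow_natCast q D, ← Real.rpow_add hq0]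
      apply Real.rpow_le_rpow_of_exponent_ge hq0 hq1.le
      rcases Nat.even_or_odd r with ⟨m, hm⟩ | ⟨m, hm⟩
      · have hD2 : D = m * (m + 1) := by rw [hD, hm]; congr 1 <;> omega
        rw [hD2, hm]
        push_cast
        nlinarith
      · have hD2 : D = m * (m + 1) := by rw [hD, hm]; congr 1 <;> omega
        rw [hD2, hm]
        push_cast
        nlinarith
    have hWU : ∑' k : ℤ, w k ≤ (q ^ (-(1/4 : ℝ)) * q ^ (((r:ℝ) ^ 2) / 4)) *
        ∑' k : ℤ, (q ^ k * γ) * qGauss q (q ^ k * γ) := by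
      rw [hre]
      exact h2.trans (mul_le_mul_of_nonneg_right hrpow hun)
    have hNu : qNu q γ r (qGauss q) = (1 - q) * (2 * ∑' k : ℤ, w k) := by
      unfold qNu qInt
      have hptw : ∀ k : ℤ, (q ^ k * γ) *
          (|qGauss q (q ^ k * γ) * (q ^ k * γ) ^ r| +
           |qGauss q (-(q ^ k * γ)) * (-(q ^ k * γ)) ^ r|)
          = 2 * ((q ^ k * γ) ^ (r + 1) * qGauss q (q ^ k * γ)) := fun k => by
        have hy : (0:ℝ) < q ^ k * γ := by positivity
        rw [qGauss_even, abs_mul, abs_mul, abs_pow, abs_pow, abs_neg,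
          abs_of_pos (qGauss_pos hq0 hq1 _), abs_of_pos hy]
        ring
      rw [tsum_congr hptw, tsum_mul_left,
        show ∑' k : ℤ, w k = q ^ (r * (r + 1) / 2) *
          ∑' k : ℤ, ((q ^ k * γ) ^ (r + 1) * qGauss q (q ^ k * γ)) from tsum_mul_left]
      ring
    rw [hNu, hVal]
    have h1q : (0:ℝ) < 1 - q := by linarith
    have hA : (0:ℝ) < q ^ (-(1/4 : ℝ)) := Real.rpow_pos_of_pos hq0 _
    have hB : (0:ℝ) < q ^ (((r:ℝ) ^ 2) / 4) := Real.rpow_pos_of_pos hq0 _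
    nlinarith [mul_le_mul_of_nonneg_left hWU (by linarith : (0:ℝ) ≤ 2 * (1 - q)),
      mul_nonneg (mul_nonneg hA.le hB.le) hun,
      mul_nonneg (mul_nonneg h1q.le (mul_nonneg hA.le hB.le)) hun]
  refine ⟨key, 1, one_pos, 2 * q ^ (-(1/4 : ℝ)) * qInt q γ (qGauss q), ?_, fun e => ?_⟩
  · have hA : (0:ℝ) < q ^ (-(1/4 : ℝ)) := Real.rpow_pos_of_pos hq0 _
    positivity
  · calc qNu q γ e (qGauss q)
        ≤ 2 * q ^ (-(1/4 : ℝ)) * qInt q γ (qGauss q) * q ^ (((e:ℝ) ^ 2) / 4) := key e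
      _ = 2 * q ^ (-(1/4 : ℝ)) * qInt q γ (qGauss q) * q ^ (((e:ℝ) ^ 2) / 4) * 1 ^ e := by
          rw [one_pow, mul_one]
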